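/- Fix w ∈ ℝⁿ and β ∈ (0,1), and suppose L(w,·) is measurable and μ-integrable and Φ(w,·) is continuous. Then VaR_β(w) attains the minimum of F_β(w,·); that is, F_β(w, VaR_β(w)) = VaR_β(w) + (1−β)⁻¹ ∫ max(L(w,r) − VaR_β(w), 0) dμ(r) = CVaR_β(w). -/

import Mathlib

open MeasureTheory Filter
open scoped ENNReal

/-- For fixed `w` and `β ∈ (0,1)`, with `L w` measurable and integrable and
`Φ(w,·)` continuous, `VaR_β(w) = min {α | Φ(w,α) ≥ β}` (expressed as `sInf`) attains the
minimum of `F_β(w,·)`, and `F_β(w, VaR_β(w)) = CVaR_β(w)`. -/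
theorem stmt_5 {n : ℕ} (μ : Measure (Fin n → ℝ)) [IsProbabilityMeasure μ]
    (L : (Fin n → ℝ) → (Fin n → ℝ) → ℝ) (w : Fin n → ℝ) (β : ℝ)
    (hβ : β ∈ Set.Ioo (0 : ℝ) 1)
    (hmeas : Measurable (L w)) (hint : Integrable (L w) μ)
    (hcont : Continuous (fun α : ℝ => (μ {r | L w r ≤ α}).toReal))
    (v : ℝ) (hv : v = sInf {a : ℝ | β ≤ (μ {r | L w r ≤ a}).toReal}) :
    (∀ α : ℝ,
      v + (1 - β)⁻¹ * ∫ r, max (L w r - v) 0 ∂μ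
        ≤ α + (1 - β)⁻¹ * ∫ r, max (L w r - α) 0 ∂μ) ∧
    v + (1 - β)⁻¹ * ∫ r, max (L w r - v) 0 ∂μ
      = (1 - β)⁻¹ * ∫ r in {r | v ≤ L w r}, L w r ∂μ := by
  obtain ⟨hβ0, hβ1⟩ := hβ
  set g : (Fin n → ℝ) → ℝ := L w with hg
  set Φ : ℝ → ℝ := fun a => (μ {r | g r ≤ a}).toReal with hΦdef
  have hms : ∀ a : ℝ, MeasurableSet {r | g r ≤ a} := fun a => hmeas measurableSet_Iic
  have hmono : Monotone Φ := by
    intro a b hab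
    exact ENNReal.toReal_mono (measure_ne_top μ _)
      (measure_mono (fun r hr => le_trans hr hab))
  set S : Set ℝ := {a : ℝ | β ≤ Φ a} with hSdef
  -- S nonempty
  have hS_ne : S.Nonempty := by
    have h1 : Tendsto (fun k : ℕ => μ {r | g r ≤ (k : ℝ)}) atTop
        (nhds (μ (⋃ k : ℕ, {r | g r ≤ (k : ℝ)}))) := by
      refine tendsto_measure_iUnion_atTop (fun i j hij r hr => ?_)
      simp only [Set.mem_setOf_eq] at hr ⊢
      exact le_trans hr (Nat.cast_le.2 hij)
    have hU : (⋃ k : ℕ, {r | g r ≤ (k : ℝ)}) = Set.univ := by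
      ext r
      simp only [Set.mem_iUnion, Set.mem_univ, iff_true, Set.mem_setOf_eq]
      exact exists_nat_ge (g r)
    rw [hU, measure_univ] at h1
    have h2 : Tendsto (fun k : ℕ => Φ (k : ℝ)) atTop (nhds 1) := by
      have := (ENNReal.tendsto_toReal (by norm_num : (1 : ℝ≥0∞) ≠ ⊤)).comp h1
      simpa [Function.comp_def, hΦdef] using this
    obtain ⟨k, hk⟩ := (h2.eventually (eventually_gt_nhds hβ1)).exists
    exact ⟨(k : ℝ), hk.le⟩
  -- S bounded below
  have hbdd : BddBelow S := by
    have h1 : Tendsto (fun k : ℕ => μ {r | g r ≤ -(k : ℝ)}) atTop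
        (nhds (μ (⋂ k : ℕ, {r | g r ≤ -(k : ℝ)}))) := by
      refine tendsto_measure_iInter_atTop (fun k => (hms _).nullMeasurableSet)
        (fun i j hij r hr => ?_) ⟨0, measure_ne_top μ _⟩
      simp only [Set.mem_setOf_eq] at hr ⊢
      exact le_trans hr (neg_le_neg (Nat.cast_le.2 hij))
    have hI : (⋂ k : ℕ, {r | g r ≤ -(k : ℝ)}) = ∅ := by
      ext r
      simp only [Set.mem_iInter, Set.mem_setOf_eq, Set.mem_empty_iff_false, iff_false, not_forall]
      obtain ⟨k, hk⟩ := exists_nat_ge (-(g r))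
      exact ⟨k + 1, by push_neg; push_cast; linarith⟩
    rw [hI, measure_empty] at h1
    have h2 : Tendsto (fun k : ℕ => Φ (-(k : ℝ))) atTop (nhds 0) := by
      have := (ENNReal.tendsto_toReal (by norm_num : (0 : ℝ≥0∞) ≠ ⊤)).comp h1
      simpa [Function.comp_def, hΦdef] using this
    obtain ⟨k, hk⟩ := (h2.eventually (eventually_lt_nhds hβ0)).exists
    refine ⟨-(k : ℝ), fun b hb => ?_⟩
    by_contra hc
    push_neg at hc
    exact absurd (le_trans hb (hmono hc.le)) (not_le.2 hk)
  have hSclosed : IsClosed S := isClosed_le continuous_const hcont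
  -- Φ v = β
  have hvS : β ≤ Φ v := by
    have : v ∈ S := hv ▸ hSclosed.csInf_mem hS_ne hbdd
    exact this
  have hΦv_le : Φ v ≤ β := by
    have hseq : Tendsto (fun k : ℕ => v - 1 / ((k : ℝ) + 1)) atTop (nhds v) := by
      have := tendsto_one_div_add_atTop_nhds_zero_nat.const_sub v
      simpa using this
    have hseq2 : Tendsto (fun k : ℕ => Φ (v - 1 / ((k : ℝ) + 1))) atTop (nhds (Φ v)) :=
      (hcont.tendsto v).comp hseq
    refine le_of_tendsto hseq2 (Eventually.of_forall fun k => ?_)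
    have hlt : v - 1 / ((k : ℝ) + 1) < v := by
      have : (0 : ℝ) < 1 / ((k : ℝ) + 1) := by positivity
      linarith
    by_contra hc
    push_neg at hc
    have hle : sInf S ≤ v - 1 / ((k : ℝ) + 1) :=
      csInf_le hbdd (show v - 1 / ((k : ℝ) + 1) ∈ S from hc.le)
    rw [← hv] at hle
    linarith
  have hΦv : Φ v = β := le_antisymm hΦv_le hvS
  -- μ {g < v} = β
  have hlt' : (μ {r | g r < v}).toReal = β := by
    have hU : {r | g r < v} = ⋃ k : ℕ, {r | g r ≤ v - 1 / ((k : ℝ) + 1)} := by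
      ext r
      simp only [Set.mem_setOf_eq, Set.mem_iUnion]
      constructor
      · intro hr
        obtain ⟨k, hk⟩ := exists_nat_ge (1 / (v - g r))
        refine ⟨k, ?_⟩
        have hpos : 0 < v - g r := by linarith
        have h1 : 0 < 1 / (v - g r) := by positivity
        have h2 : 1 / (v - g r) ≤ (k : ℝ) + 1 := by linarith
        have h3 : 1 / ((k : ℝ) + 1) ≤ v - g r := by
          rw [div_le_iff₀ (by linarith : (0:ℝ) < (k : ℝ) + 1)]
          rw [div_le_iff₀ hpos] at h2
          linarith
        linarith
      · rintro ⟨k, hk⟩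
        have : (0 : ℝ) < 1 / ((k : ℝ) + 1) := by positivity
        linarith
    have h1 : Tendsto (fun k : ℕ => μ {r | g r ≤ v - 1 / ((k : ℝ) + 1)}) atTop
        (nhds (μ (⋃ k : ℕ, {r | g r ≤ v - 1 / ((k : ℝ) + 1)}))) := by
      refine tendsto_measure_iUnion_atTop (fun i j hij r hr => ?_)
      simp only [Set.mem_setOf_eq] at hr ⊢
      have h4 : 1 / ((j : ℝ) + 1) ≤ 1 / ((i : ℝ) + 1) := by
        apply one_div_le_one_div_of_le (by positivity)
        have : (i : ℝ) ≤ (j : ℝ) := Nat.cast_le.2 hij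
        linarith
      linarith
    rw [← hU] at h1
    have h2 : Tendsto (fun k : ℕ => Φ (v - 1 / ((k : ℝ) + 1))) atTop
        (nhds ((μ {r | g r < v}).toReal)) := by
      have := (ENNReal.tendsto_toReal (measure_ne_top μ _)).comp h1
      simpa [Function.comp_def, hΦdef] using this
    have hseq : Tendsto (fun k : ℕ => v - 1 / ((k : ℝ) + 1)) atTop (nhds v) := by
      have := tendsto_one_div_add_atTop_nhds_zero_nat.const_sub v
      simpa using this
    have h3 : Tendsto (fun k : ℕ => Φ (v - 1 / ((k : ℝ) + 1))) atTop (nhds (Φ v)) :=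
      (hcont.tendsto v).comp hseq
    rw [← hΦv]
    exact tendsto_nhds_unique h2 h3
  -- μ {v ≤ g} = 1 - β  and  μ {v < g} = 1 - β
  have toReal_compl : ∀ s : Set (Fin n → ℝ), MeasurableSet s →
      (μ sᶜ).toReal = 1 - (μ s).toReal := by
    intro s hs
    rw [prob_compl_eq_one_sub hs, ENNReal.toReal_sub_of_le prob_le_one ENNReal.one_ne_top]
    simp
  have hge : (μ {r | v ≤ g r}).toReal = 1 - β := by
    have : {r | v ≤ g r} = {r | g r < v}ᶜ := by ext r; simp [not_lt]
    rw [this, toReal_compl _ (measurableSet_lt hmeas measurable_const), hlt']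
  have hgt : (μ {r | v < g r}).toReal = 1 - β := by
    have : {r | v < g r} = {r | g r ≤ v}ᶜ := by ext r; simp [not_le]
    rw [this, toReal_compl _ (hms v)]
    have : (μ {r | g r ≤ v}).toReal = β := hΦv
    rw [this]
  -- integrability
  have hInt : ∀ t : ℝ, Integrable (fun r => max (g r - t) 0) μ := by
    intro t
    have := (hint.sub (integrable_const t)).pos_part
    simpa [max_def] using this
  have hβne : (1 : ℝ) - β ≠ 0 := by linarith
  have hcβ : (1 - β)⁻¹ * (1 - β) = 1 := inv_mul_cancel₀ hβne
  have hcnn : (0 : ℝ) ≤ (1 - β)⁻¹ := inv_nonneg.2 (by linarith)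
  -- key inequality
  have key : ∀ α : ℝ, (v - α) * (1 - β) ≤
      (∫ r, max (g r - α) 0 ∂μ) - ∫ r, max (g r - v) 0 ∂μ := by
    intro α
    have hptw : ∀ r, Set.indicator {r | v < g r} (fun _ => v - α) r ≤
        max (g r - α) 0 - max (g r - v) 0 := by
      intro r
      by_cases hr : v < g r
      · rw [Set.indicator_of_mem (show r ∈ {r' | v < g r'} from hr)]
        have h1 : max (g r - v) 0 = g r - v := max_eq_left (by linarith)
        have h2 := le_max_left (g r - α) 0
        linarith
      · rw [Set.indicator_of_notMem (show r ∉ {r' | v < g r'} from hr)]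
        push_neg at hr
        have h1 : max (g r - v) 0 = 0 := max_eq_right (by linarith)
        have h2 := le_max_right (g r - α) 0
        linarith
    have hIndInt : Integrable (Set.indicator {r | v < g r} (fun _ => (v - α : ℝ))) μ :=
      (integrable_const (v - α)).indicator (measurableSet_lt measurable_const hmeas)
    have hsubInt : Integrable (fun r => max (g r - α) 0 - max (g r - v) 0) μ :=
      (hInt α).sub (hInt v)
    have hmono' : ∫ r, Set.indicator {r | v < g r} (fun _ => v - α) r ∂μ
        ≤ ∫ r, (max (g r - α) 0 - max (g r - v) 0) ∂μ :=
      integral_mono hIndInt hsubInt hptw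
    rw [integral_sub (hInt α) (hInt v)] at hmono'
    rw [integral_indicator (measurableSet_lt measurable_const hmeas), setIntegral_const,
      measureReal_def, hgt, smul_eq_mul] at hmono'
    calc (v - α) * (1 - β) = (1 - β) * (v - α) := by ring
      _ ≤ _ := hmono'
  constructor
  · intro α
    have h := key α
    set Iα := ∫ r, max (g r - α) 0 ∂μ
    set Iv := ∫ r, max (g r - v) 0 ∂μ
    have h2 : (1 - β)⁻¹ * ((v - α) * (1 - β)) ≤ (1 - β)⁻¹ * (Iα - Iv) :=
      mul_le_mul_of_nonneg_left h hcnn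
    have h3 : (1 - β)⁻¹ * ((v - α) * (1 - β)) = v - α := by
      field_simp
    rw [h3, mul_sub] at h2
    linarith
  · -- part 2
    have hind : (fun r => max (g r - v) 0) =
        Set.indicator {r | v ≤ g r} (fun r => g r - v) := by
      funext r
      by_cases hr : v ≤ g r
      · rw [Set.indicator_of_mem (show r ∈ {r' | v ≤ g r'} from hr)]
        exact max_eq_left (by linarith)
      · rw [Set.indicator_of_notMem (show r ∉ {r' | v ≤ g r'} from hr)]
        push_neg at hr
        exact max_eq_right (by linarith)
    have hmsS : MeasurableSet {r | v ≤ g r} := measurableSet_le measurable_const hmeas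
    have h1 : ∫ r, max (g r - v) 0 ∂μ = ∫ r in {r | v ≤ g r}, (g r - v) ∂μ := by
      rw [hind, integral_indicator hmsS]
    have h2 : ∫ r in {r | v ≤ g r}, (g r - v) ∂μ
        = (∫ r in {r | v ≤ g r}, g r ∂μ) - (1 - β) * v := by
      rw [integral_sub hint.integrableOn (integrableOn_const (measure_ne_top μ _))]
      rw [setIntegral_const, measureReal_def, hge, smul_eq_mul]
    rw [h1, h2]
    field_simp
    ring
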